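/- Let p be an odd prime and G = GL₂(F_p). Let St be the Steinberg representation over ℚ̄ and T' ⊂ G a non-split maximal torus (≅ F_{p²}^×). Then the space of T'-invariants St^{T'} is zero. -/

import Mathlib

open Module Matrix

variable (p : ℕ) [Fact p.Prime]

/-- The Borel subgroup `B₊` of upper triangular matrices in `GL₂(𝔽_p)`. -/
def Bplus : Subgroup (GL (Fin 2) (ZMod p)) where
  carrier := {g | (g : Matrix (Fin 2) (Fin 2) (ZMod p)) 1 0 = 0}
  one_mem' := by simp [Matrix.one_apply]
  mul_mem' := by
    intro a b ha hb
    simp only [Set.mem_setOf_eq, Units.val_mul, Matrix.mul_apply, Fin.sum_univ_two] at *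
    simp [ha, hb]
  inv_mem' := by
    intro a ha
    simp only [Set.mem_setOf_eq] at *
    rw [Matrix.coe_units_inv, Matrix.inv_def]
    simp [Matrix.adjugate_fin_two, ha]

/-- The Borel subgroup `B₋` of lower triangular matrices in `GL₂(𝔽_p)`. -/
def Bminus : Subgroup (GL (Fin 2) (ZMod p)) where
  carrier := {g | (g : Matrix (Fin 2) (Fin 2) (ZMod p)) 0 1 = 0}
  one_mem' := by simp [Matrix.one_apply]
  mul_mem' := by
    intro a b ha hb
    simp only [Set.mem_setOf_eq, Units.val_mul, Matrix.mul_apply, Fin.sum_univ_two] at *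
    simp [ha, hb]
  inv_mem' := by
    intro a ha
    simp only [Set.mem_setOf_eq] at *
    rw [Matrix.coe_units_inv, Matrix.inv_def]
    simp [Matrix.adjugate_fin_two, ha]

/-- The split maximal torus `T = B₊ ∩ B₋` of diagonal matrices in `GL₂(𝔽_p)`. -/
def Tsplit : Subgroup (GL (Fin 2) (ZMod p)) := Bplus p ⊓ Bminus p

/-- The embedding `𝔽_{p²}^× → GL₂(𝔽_p)` given by a choice of an `𝔽_p`-basis `b`
of `𝔽_{p²}` (each `z` acts by multiplication on `𝔽_{p²} ≅ 𝔽_p²`). -/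
noncomputable def torusHom (b : Basis (Fin 2) (ZMod p) (GaloisField p 2)) :
    (GaloisField p 2)ˣ →* GL (Fin 2) (ZMod p) :=
  Units.map (((LinearMap.toMatrixAlgEquiv b).toAlgHom.comp
    (Algebra.lmul (ZMod p) (GaloisField p 2))).toRingHom.toMonoidHom)

/-- The non-split maximal torus `T' ≅ 𝔽_{p²}^×`. -/
noncomputable def Tnonsplit (b : Basis (Fin 2) (ZMod p) (GaloisField p 2)) :
    Subgroup (GL (Fin 2) (ZMod p)) := (torusHom p b).range


section Aux

variable {k G V : Type*} [CommRing k] [Group G] [AddCommGroup V] [Module k V]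

/-- A `ρ`-stable `k`-subspace gives a submodule of `ρ.asModule`. -/
private noncomputable def repSubmodule (ρ : Representation k G V) (M : Submodule k V)
    (hM : ∀ (g : G) (x : V), x ∈ M → ρ g x ∈ M) :
    Submodule (MonoidAlgebra k G) ρ.asModule where
  carrier := {x | ρ.asModuleEquiv x ∈ M}
  add_mem' := by intro a b ha hb; simp only [Set.mem_setOf_eq, map_add] at *; exact M.add_mem ha hb
  zero_mem' := by simp only [Set.mem_setOf_eq, map_zero]; exact M.zero_mem
  smul_mem' := by
    intro r x hx
    simp only [Set.mem_setOf_eq] at hx ⊢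
    rw [Representation.asModuleEquiv_map_smul]
    induction r using MonoidAlgebra.induction_linear with
    | zero => simp only [map_zero, LinearMap.zero_apply]; exact M.zero_mem
    | add f g hf hg => rw [map_add, LinearMap.add_apply]; exact M.add_mem hf hg
    | single g c =>
        rw [Representation.asAlgebraHom_single]
        exact M.smul_mem c (hM g _ hx)

/-- A nonzero `ρ`-stable subspace of a simple representation is everything. -/
private theorem stable_eq_top (ρ : Representation k G V)
    (hirr : IsSimpleModule (MonoidAlgebra k G) ρ.asModule) (M : Submodule k V)
    (hM : ∀ (g : G) (x : V), x ∈ M → ρ g x ∈ M) (hne : M ≠ ⊥) : M = ⊤ := by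
  haveI := hirr
  rcases eq_bot_or_eq_top (repSubmodule ρ M hM) with h | h
  · exfalso
    apply hne
    rw [Submodule.eq_bot_iff]
    intro x hx
    have hx' : ρ.asModuleEquiv.symm x ∈ repSubmodule ρ M hM := by
      show ρ.asModuleEquiv (ρ.asModuleEquiv.symm x) ∈ M
      simpa using hx
    rw [h, Submodule.mem_bot] at hx'
    have := congrArg ρ.asModuleEquiv hx'
    simpa using this
  · rw [Submodule.eq_top_iff']
    intro x
    have hx' : ρ.asModuleEquiv.symm x ∈ repSubmodule ρ M hM := by rw [h]; trivial
    have : ρ.asModuleEquiv (ρ.asModuleEquiv.symm x) ∈ M := hx'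
    simpa using this

end Aux

/-- `T'` acts transitively on `G/B₊`. -/
theorem torus_transitive (p : ℕ) [Fact p.Prime] (b : Basis (Fin 2) (ZMod p) (GaloisField p 2))
    (g : GL (Fin 2) (ZMod p)) : ∃ t ∈ Tnonsplit p b, t⁻¹ * g ∈ Bplus p := by
  set w : Fin 2 → ZMod p := fun i => (g : Matrix (Fin 2) (Fin 2) (ZMod p)) i 0 with hw
  have hdet : (g : Matrix (Fin 2) (Fin 2) (ZMod p)).det ≠ 0 :=
    ((Matrix.isUnit_iff_isUnit_det _).mp g.isUnit).ne_zero
  have hw0 : w ≠ 0 := by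
    intro h
    apply hdet
    have h0 : (g : Matrix (Fin 2) (Fin 2) (ZMod p)) 0 0 = 0 := congrFun h 0
    have h1 : (g : Matrix (Fin 2) (Fin 2) (ZMod p)) 1 0 = 0 := congrFun h 1
    rw [Matrix.det_fin_two, h0, h1]
    ring
  set x : GaloisField p 2 := b.equivFun.symm w with hx
  have hx0 : x ≠ 0 := by
    rw [hx]
    exact b.equivFun.symm.map_ne_zero_iff.mpr hw0
  have hb0 : (b 0 : GaloisField p 2) ≠ 0 := b.ne_zero 0
  set z : GaloisField p 2 := x * (b 0)⁻¹ with hz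
  have hz0 : z ≠ 0 := mul_ne_zero hx0 (inv_ne_zero hb0)
  refine ⟨torusHom p b (Units.mk0 z hz0), ⟨Units.mk0 z hz0, rfl⟩, ?_⟩
  show ((((torusHom p b (Units.mk0 z hz0))⁻¹ * g : GL (Fin 2) (ZMod p)) :
      Matrix (Fin 2) (Fin 2) (ZMod p)) 1 0 = 0)
  rw [← map_inv]
  have hval : ((torusHom p b (Units.mk0 z hz0)⁻¹ : GL (Fin 2) (ZMod p)) :
      Matrix (Fin 2) (Fin 2) (ZMod p)) =
      LinearMap.toMatrix b b (Algebra.lmul (ZMod p) (GaloisField p 2) z⁻¹) := by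
    have h1 : ((Units.mk0 z hz0)⁻¹ : (GaloisField p 2)ˣ) = Units.mk0 z⁻¹ (inv_ne_zero hz0) := by
      ext
      simp
    show LinearMap.toMatrixAlgEquiv b (Algebra.lmul (ZMod p) (GaloisField p 2)
      (((Units.mk0 z hz0)⁻¹ : (GaloisField p 2)ˣ) : GaloisField p 2)) = _
    rw [h1]
    rfl
  rw [Units.val_mul, hval]
  have hkey : (LinearMap.toMatrix b b (Algebra.lmul (ZMod p) (GaloisField p 2) z⁻¹)) *ᵥ
      (b.repr x) = b.repr ((Algebra.lmul (ZMod p) (GaloisField p 2) z⁻¹) x) :=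
    LinearMap.toMatrix_mulVec_repr b b _ x
  have hrepr : ⇑(b.repr x) = w := by
    rw [← Basis.equivFun_apply, hx, b.equivFun.apply_symm_apply]
  have hzx : (Algebra.lmul (ZMod p) (GaloisField p 2) z⁻¹) x = b 0 := by
    rw [Algebra.coe_lmul_eq_mul, LinearMap.mul_apply', hz, _root_.mul_inv_rev, inv_inv,
      mul_assoc, inv_mul_cancel₀ hx0, mul_one]
  rw [hrepr, hzx, Basis.repr_self] at hkey
  have : (LinearMap.toMatrix b b (Algebra.lmul (ZMod p) (GaloisField p 2) z⁻¹) *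
      (g : Matrix (Fin 2) (Fin 2) (ZMod p))) 1 0 =
      ((LinearMap.toMatrix b b (Algebra.lmul (ZMod p) (GaloisField p 2) z⁻¹)) *ᵥ w) 1 := by
    simp [Matrix.mul_apply, Matrix.mulVec, dotProduct, hw]
  rw [this, hkey]
  simp [Finsupp.single_apply]

/-- For the Steinberg representation `St` of `GL₂(𝔽_p)` over `ℚ̄` (`p` odd; characterized
among irreducible representations by having dimension `p` and a nonzero `B₊`-invariant
vector) and a non-split maximal torus `T'`, the space `St^{T'}` of `T'`-invariants is zero. -/
theorem stmt_12 (hp : Odd p) (b : Basis (Fin 2) (ZMod p) (GaloisField p 2))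
    (V : Type) [AddCommGroup V] [Module (AlgebraicClosure ℚ) V]
    [FiniteDimensional (AlgebraicClosure ℚ) V]
    (ρ : Representation (AlgebraicClosure ℚ) (GL (Fin 2) (ZMod p)) V)
    (hirr : IsSimpleModule
      (MonoidAlgebra (AlgebraicClosure ℚ) (GL (Fin 2) (ZMod p))) ρ.asModule)
    (hdim : finrank (AlgebraicClosure ℚ) V = p)
    (hB : Representation.invariants (ρ.comp (Bplus p).subtype) ≠ ⊥) :
    Representation.invariants (ρ.comp (Tnonsplit p b).subtype) = ⊥ := by
  classical
  obtain ⟨v, hvmem, hv0⟩ := (Submodule.ne_bot_iff _).mp hB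
  have hv : ∀ g ∈ Bplus p, ρ g v = v := by
    intro g hg
    exact (Representation.mem_invariants _ v).mp hvmem ⟨g, hg⟩
  haveI : Fintype (GL (Fin 2) (ZMod p)) := Fintype.ofFinite _
  haveI : Fintype (Tnonsplit p b) := Fintype.ofFinite _
  set S : V := ∑ t : (Tnonsplit p b), ρ (↑t) v with hS
  have claimA : ∀ g : GL (Fin 2) (ZMod p),
      (∑ t : (Tnonsplit p b), ρ (↑t * g) v) = S := by
    intro g
    obtain ⟨t₀, ht₀, hbmem⟩ := torus_transitive p b g
    have step : ∀ t : (Tnonsplit p b),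
        ρ (↑t * g) v = ρ (↑(t * (⟨t₀, ht₀⟩ : Tnonsplit p b))) v := by
      intro t
      have hdec : (↑t * g) = (↑t * t₀) * (t₀⁻¹ * g) := by group
      rw [hdec, _root_.map_mul, Module.End.mul_apply, hv _ hbmem]
      rfl
    rw [Finset.sum_congr rfl (fun t _ => step t), hS]
    exact Equiv.sum_comp (Equiv.mulRight (⟨t₀, ht₀⟩ : Tnonsplit p b))
      (fun s : Tnonsplit p b => ρ (↑s) v)
  set Φ : V := ∑ g : GL (Fin 2) (ZMod p), ρ g v with hΦ
  have hΦinv : ∀ h : GL (Fin 2) (ZMod p), ρ h Φ = Φ := by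
    intro h
    rw [hΦ, map_sum]
    have hstep : ∀ g : GL (Fin 2) (ZMod p), ρ h (ρ g v) = ρ (h * g) v := by
      intro g; rw [_root_.map_mul]; rfl
    rw [Finset.sum_congr rfl fun g _ => hstep g]
    exact Equiv.sum_comp (Equiv.mulLeft h) (fun g : GL (Fin 2) (ZMod p) => ρ g v)
  have hFub : (Fintype.card (GL (Fin 2) (ZMod p))) • S
      = (Fintype.card (Tnonsplit p b)) • Φ := by
    have h1 : ∑ g : GL (Fin 2) (ZMod p), ∑ t : (Tnonsplit p b), ρ (↑t * g) v
        = (Fintype.card (GL (Fin 2) (ZMod p))) • S := by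
      rw [Finset.sum_congr rfl fun g _ => claimA g, Finset.sum_const, Finset.card_univ]
    have h3 : ∀ t : Tnonsplit p b,
        (∑ g : GL (Fin 2) (ZMod p), ρ (↑t * g) v) = Φ := by
      intro t
      rw [hΦ]
      exact Equiv.sum_comp (Equiv.mulLeft (↑t : GL (Fin 2) (ZMod p)))
        (fun g : GL (Fin 2) (ZMod p) => ρ g v)
    have h2 : ∑ t : (Tnonsplit p b), ∑ g : GL (Fin 2) (ZMod p), ρ (↑t * g) v
        = (Fintype.card (Tnonsplit p b)) • Φ := by
      rw [Finset.sum_congr rfl fun t _ => h3 t, Finset.sum_const, Finset.card_univ]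
    rw [← h1, ← h2]
    exact Finset.sum_comm
  set M := Submodule.span (AlgebraicClosure ℚ)
    (Set.range fun g : GL (Fin 2) (ZMod p) => ρ g v) with hMdef
  have hMstab : ∀ (g : GL (Fin 2) (ZMod p)) (x : V), x ∈ M → ρ g x ∈ M := by
    intro g x hx
    have hle : Submodule.map (ρ g) M ≤ M := by
      rw [hMdef, Submodule.map_span, Submodule.span_le]
      rintro _ ⟨_, ⟨g', rfl⟩, rfl⟩
      exact Submodule.subset_span
        ⟨g * g', show ρ (g * g') v = ρ g (ρ g' v) by rw [_root_.map_mul]; rfl⟩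
    exact hle ⟨x, hx, rfl⟩
  have hMne : M ≠ ⊥ := by
    intro h
    apply hv0
    have hvM : v ∈ M := Submodule.subset_span ⟨1, by simp⟩
    rw [h] at hvM
    simpa using hvM
  have hMtop := stable_eq_top ρ hirr M hMstab hMne
  rw [Submodule.eq_bot_iff]
  intro u hu
  by_contra hu0
  have hut : ∀ t : Tnonsplit p b, ρ (↑t) u = u := fun t =>
    (Representation.mem_invariants _ u).mp hu t
  set L : V →ₗ[AlgebraicClosure ℚ] V := ∑ t : (Tnonsplit p b), (ρ (↑t)) with hL
  have hLu : L u = (Fintype.card (Tnonsplit p b) : AlgebraicClosure ℚ) • u := by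
    rw [hL, LinearMap.sum_apply, Finset.sum_congr rfl fun t _ => hut t,
      Finset.sum_const, Finset.card_univ, ← Nat.cast_smul_eq_nsmul (AlgebraicClosure ℚ)]
  have hLgv : ∀ g : GL (Fin 2) (ZMod p), L (ρ g v) = S := by
    intro g
    rw [hL, LinearMap.sum_apply, ← claimA g]
    refine Finset.sum_congr rfl fun t _ => ?_
    rw [_root_.map_mul]
    rfl
  have hmap : Submodule.map L M ≤ Submodule.span (AlgebraicClosure ℚ) {S} := by
    rw [hMdef, Submodule.map_span, Submodule.span_le]
    rintro _ ⟨_, ⟨g, rfl⟩, rfl⟩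
    exact Submodule.subset_span (show L (ρ g v) ∈ ({S} : Set V) by rw [hLgv g]; rfl)
  have huS : (Fintype.card (Tnonsplit p b) : AlgebraicClosure ℚ) • u
      ∈ Submodule.span (AlgebraicClosure ℚ) {S} := by
    rw [← hLu]
    exact hmap ⟨u, by rw [hMtop]; trivial, rfl⟩
  have hcard_ne : (Fintype.card (Tnonsplit p b) : AlgebraicClosure ℚ) ≠ 0 :=
    Nat.cast_ne_zero.mpr Fintype.card_ne_zero
  have huS' : u ∈ Submodule.span (AlgebraicClosure ℚ) {S} := by
    have h := Submodule.smul_mem _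
      ((Fintype.card (Tnonsplit p b) : AlgebraicClosure ℚ))⁻¹ huS
    rwa [inv_smul_smul₀ hcard_ne] at h
  have hS0 : S ≠ 0 := by
    intro h
    apply hu0
    rw [h, Submodule.span_zero_singleton] at huS'
    simpa using huS'
  have hΦ0 : Φ ≠ 0 := by
    intro h
    apply hS0
    rw [h, smul_zero] at hFub
    have hcardG : (Fintype.card (GL (Fin 2) (ZMod p)) : AlgebraicClosure ℚ) ≠ 0 :=
      Nat.cast_ne_zero.mpr Fintype.card_ne_zero
    have h2 : (Fintype.card (GL (Fin 2) (ZMod p)) : AlgebraicClosure ℚ) • S = 0 := by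
      rw [Nat.cast_smul_eq_nsmul]
      exact hFub
    exact (smul_eq_zero.mp h2).resolve_left hcardG
  have hNstab : ∀ (g : GL (Fin 2) (ZMod p)) (x : V),
      x ∈ Submodule.span (AlgebraicClosure ℚ) {Φ} →
      ρ g x ∈ Submodule.span (AlgebraicClosure ℚ) {Φ} := by
    intro g x hx
    obtain ⟨c, rfl⟩ := Submodule.mem_span_singleton.mp hx
    rw [_root_.map_smul, hΦinv g]
    exact Submodule.smul_mem _ c (Submodule.mem_span_singleton_self Φ)
  have hNne : Submodule.span (AlgebraicClosure ℚ) {Φ} ≠ ⊥ := by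
    intro h
    apply hΦ0
    have hm := Submodule.mem_span_singleton_self (R := AlgebraicClosure ℚ) Φ
    rw [h] at hm
    simpa using hm
  have hNtop := stable_eq_top ρ hirr _ hNstab hNne
  have hfr : finrank (AlgebraicClosure ℚ) V = 1 := by
    rw [← finrank_top (AlgebraicClosure ℚ) V, ← hNtop, finrank_span_singleton hΦ0]
  have hlt := (Fact.out : p.Prime).one_lt
  omega
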